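/- Let C1, C2 be nonempty closed convex subsets of R^n. If the Hausdorff distance between C1 and C2 is finite, then recc C1 = recc C2. -/

import Mathlib

open Metric Set Filter
open scoped ENNReal Pointwise Topology RealInnerProductSpace

noncomputable section

/-- The recession cone of a set `C`. -/
def recc {n : ℕ} (C : Set (EuclideanSpace ℝ (Fin n))) : Set (EuclideanSpace ℝ (Fin n)) :=
  {d | ∀ x ∈ C, ∀ t : ℝ, 0 ≤ t → x + t • d ∈ C}

/-- The excess of `C₁` over `C₂`: `sup_{c₁ ∈ C₁} inf_{c₂ ∈ C₂} ‖c₁ - c₂‖`, valued in `ℝ≥0∞`. -/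
def exc {n : ℕ} (C₁ C₂ : Set (EuclideanSpace ℝ (Fin n))) : ℝ≥0∞ :=
  ⨆ x ∈ C₁, EMetric.infEdist x C₂

lemma aux_recc {n : ℕ} (C : Set (EuclideanSpace ℝ (Fin n)))
    (hC : C.Nonempty) (hc : IsClosed C) (hv : Convex ℝ C)
    (x₁ d : EuclideanSpace ℝ (Fin n)) (R : ℝ)
    (hR : ∀ t : ℝ, 0 ≤ t → Metric.infDist (x₁ + t • d) C ≤ R) :
    ∀ x ∈ C, ∀ t : ℝ, 0 ≤ t → x + t • d ∈ C := by
  intro x hx t ht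
  rcases eq_or_lt_of_le ht with rfl | htpos
  · simpa using hx
  · rw [← hc.closure_eq]
    rw [Metric.mem_closure_iff]
    intro ε hε
    set M : ℝ := |R| + 1 + ‖x - x₁‖ with hM
    have hMpos : 0 < M := by positivity
    set s : ℝ := max t (t * M / ε) + 1 with hs
    have hst : t < s := lt_of_le_of_lt (le_max_left _ _) (lt_add_one _)
    have hspos : 0 < s := lt_trans htpos hst
    have hsε : t * M / s < ε := by
      rw [div_lt_iff₀ hspos]
      have : t * M / ε < s := lt_of_le_of_lt (le_max_right _ _) (lt_add_one _)
      calc t * M = (t * M / ε) * ε := by field_simp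
        _ < s * ε := by
            apply mul_lt_mul_of_pos_right this hε
        _ = ε * s := mul_comm _ _
    -- get z ∈ C close to x₁ + s • d
    have h1 : Metric.infDist (x₁ + s • d) C < |R| + 1 := by
      refine lt_of_le_of_lt (hR s hspos.le) ?_
      nlinarith [le_abs_self R]
    obtain ⟨z, hz, hdz⟩ := (Metric.infDist_lt_iff hC).mp h1
    set p := x + (t / s) • (z - x) with hp
    have hts0 : 0 ≤ t / s := by positivity
    have hts1 : t / s ≤ 1 := by rw [div_le_one hspos]; exact hst.le
    have hpC : p ∈ C := by
      have := hv hx hz (a := 1 - t / s) (b := t / s) (by linarith) hts0 (by ring)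
      convert this using 1
      rw [hp]
      module
    refine ⟨p, hpC, ?_⟩
    have hdist : dist (x + t • d) p = (t / s) * ‖s • d - (z - x)‖ := by
      rw [hp, dist_eq_norm]
      have : x + t • d - (x + (t / s) • (z - x)) = (t / s) • (s • d - (z - x)) := by
        have hts : t / s * s = t := div_mul_cancel₀ t hspos.ne'
        rw [smul_sub (t/s) (s • d), smul_smul, hts]
        module
      rw [this, norm_smul, Real.norm_eq_abs, abs_of_nonneg hts0]
    have hb : ‖s • d - (z - x)‖ < M := by
      have : s • d - (z - x) = (x₁ + s • d - z) + (x - x₁) := by module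
      rw [this]
      calc ‖(x₁ + s • d - z) + (x - x₁)‖ ≤ ‖x₁ + s • d - z‖ + ‖x - x₁‖ := norm_add_le _ _
        _ < (|R| + 1) + ‖x - x₁‖ := by
            have := hdz; rw [dist_eq_norm] at this; linarith
        _ = M := by rw [hM]
    calc dist (x + t • d) p = (t / s) * ‖s • d - (z - x)‖ := hdist
      _ < (t / s) * M := by
          apply mul_lt_mul_of_pos_left hb (by positivity)
      _ = t * M / s := by ring
      _ < ε := hsε

theorem stmt4 {n : ℕ} (C₁ C₂ : Set (EuclideanSpace ℝ (Fin n)))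
    (h₁ : C₁.Nonempty) (h₂ : C₂.Nonempty) (hc₁ : IsClosed C₁) (hc₂ : IsClosed C₂)
    (hv₁ : Convex ℝ C₁) (hv₂ : Convex ℝ C₂)
    (hfin : EMetric.hausdorffEdist C₁ C₂ ≠ ⊤) :
    recc C₁ = recc C₂ := by
  have key : ∀ (A B : Set (EuclideanSpace ℝ (Fin n))), A.Nonempty → B.Nonempty →
      IsClosed B → Convex ℝ B → EMetric.hausdorffEdist A B ≠ ⊤ → recc A ⊆ recc B := by
    intro A B hA hB hcB hvB hfin' d hd
    obtain ⟨x₁, hx₁⟩ := hA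
    exact aux_recc B hB hcB hvB x₁ d (Metric.hausdorffDist A B)
      (fun t ht => Metric.infDist_le_hausdorffDist_of_mem (hd x₁ hx₁ t ht) hfin')
  exact Set.Subset.antisymm (key C₁ C₂ h₁ h₂ hc₂ hv₂ hfin)
    (key C₂ C₁ h₂ h₁ hc₁ hv₁ (by rw [show EMetric.hausdorffEdist C₂ C₁ = EMetric.hausdorffEdist C₁ C₂ from EMetric.hausdorffEdist_comm]; exact hfin))
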